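/- Fix ρ ∈ (0,1) and let g_ρ : 𝔻 → ℝ³ be given by g_ρ(x,y) = 2( (ρ(x²+y²)−x+y)(ρ(x²+y²)−x−y)/(ρ²(x²+y²)−2ρx+1)², 2(x−ρ(x²+y²))y/(ρ²(x²+y²)−2ρx+1)², 0 ). For (x,y) ∈ 𝔻 set u = ∂²g_ρ/∂x²(x,y) ∈ ℝ³ and v = ∂²g_ρ/∂x∂y(x,y) ∈ ℝ³, where |·| is the Euclidean norm on ℝ³. Then |u|² + |v|² + 2|u ∧ v| = 64(4ρ(ρ(x²+y²)+x)+1)/(ρ²(x²+y²)−2xρ+1)⁴ and |u|² + |v|² − 2|u ∧ v| = 0. -/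

import Mathlib

noncomputable section

/-- `ℝ³` with the Euclidean norm. -/
abbrev R3 : Type := EuclideanSpace ℝ (Fin 3)

/-- The vector in `ℝ³` with the given coordinates. -/
def e3 (a b c : ℝ) : R3 := (WithLp.equiv 2 (Fin 3 → ℝ)).symm ![a, b, c]

/-- The cross product on `ℝ³`. -/
def cross (a b : R3) : R3 :=
  e3 (a 1 * b 2 - a 2 * b 1) (a 2 * b 0 - a 0 * b 2) (a 0 * b 1 - a 1 * b 0)

/-- Partial derivative in the `x` direction, identifying `ℝ²` with `ℂ` via `z = x + iy`. -/
def pdx (u : ℂ → R3) (z : ℂ) : R3 := fderiv ℝ u z 1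

/-- Partial derivative in the `y` direction. -/
def pdy (u : ℂ → R3) (z : ℂ) : R3 := fderiv ℝ u z Complex.I

/-- Componentwise Laplacian. -/
def lap (u : ℂ → R3) (z : ℂ) : R3 := pdx (pdx u) z + pdy (pdy u) z

/-- The vector-valued harmonic map `g_ρ` on the unit disk. -/
def gRho (ρ : ℝ) : ℂ → R3 := fun z =>
  e3 (2 * ((ρ * (z.re ^ 2 + z.im ^ 2) - z.re + z.im) *
        (ρ * (z.re ^ 2 + z.im ^ 2) - z.re - z.im) /
      (ρ ^ 2 * (z.re ^ 2 + z.im ^ 2) - 2 * ρ * z.re + 1) ^ 2))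
    (2 * (2 * (z.re - ρ * (z.re ^ 2 + z.im ^ 2)) * z.im /
      (ρ ^ 2 * (z.re ^ 2 + z.im ^ 2) - 2 * ρ * z.re + 1) ^ 2))
    0


namespace GRhoAux

def Elin : ℂ →L[ℝ] R3 :=
  Complex.reCLM.smulRight (e3 1 0 0) + Complex.imCLM.smulRight (e3 0 1 0)

lemma Elin_apply (c : ℂ) : Elin c = e3 c.re c.im 0 := by
  ext i
  fin_cases i <;>
    simp [Elin, e3, PiLp.add_apply, PiLp.smul_apply]

variable (ρ : ℝ)

def ff (ρ : ℝ) : ℂ → ℂ := fun w => 2 * w ^ 2 / (1 - ρ * w) ^ 2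
def ff1 (ρ : ℝ) : ℂ → ℂ := fun w => 4 * w / (1 - ρ * w) ^ 3
def ff2 (ρ : ℝ) : ℂ → ℂ := fun w => 4 * (1 + 2 * ρ * w) / (1 - ρ * w) ^ 4

lemma hden (w : ℂ) :
    HasDerivAt (fun w : ℂ => (1 - (ρ:ℝ) * w)) (-ρ) w := by
  simpa using (((hasDerivAt_id w).const_mul ((ρ:ℝ):ℂ)).const_sub 1)

lemma hdf (w : ℂ) (hc : (1:ℂ) - ρ * w ≠ 0) : HasDerivAt (ff ρ) (ff1 ρ w) w := by
  have h1 : HasDerivAt (fun w : ℂ => 2 * w ^ 2) (4 * w) w := by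
    have := (hasDerivAt_pow 2 w).const_mul (2:ℂ)
    refine this.congr_deriv ?_
    show (2:ℂ) * ((2:ℕ) * w ^ 1) = 4 * w
    push_cast; ring
  have h2 : HasDerivAt (fun w : ℂ => (1 - (ρ:ℝ) * w) ^ 2)
      (2 * (1 - ρ * w) ^ 1 * (-ρ)) w := (hden ρ w).pow 2
  have := h1.div h2 (pow_ne_zero 2 hc)
  refine this.congr_deriv ?_
  simp only [ff1]
  field_simp
  ring

lemma hdf1 (w : ℂ) (hc : (1:ℂ) - ρ * w ≠ 0) : HasDerivAt (ff1 ρ) (ff2 ρ w) w := by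
  have h1 : HasDerivAt (fun w : ℂ => 4 * w) (4:ℂ) w := by
    simpa using (hasDerivAt_id w).const_mul (4:ℂ)
  have h2 : HasDerivAt (fun w : ℂ => (1 - (ρ:ℝ) * w) ^ 3)
      (3 * (1 - ρ * w) ^ 2 * (-ρ)) w := (hden ρ w).pow 3
  have := h1.div h2 (pow_ne_zero 3 hc)
  refine this.congr_deriv ?_
  simp only [ff2]
  field_simp
  ring

lemma hDpos (w : ℂ) (hc : (1:ℂ) - ρ*w ≠ 0) :
    0 < ρ^2*(w.re^2+w.im^2) - 2*ρ*w.re + 1 := by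
  have h := Complex.normSq_pos.mpr hc
  have he : Complex.normSq (1 - ρ*w) = ρ^2*(w.re^2+w.im^2) - 2*ρ*w.re + 1 := by
    simp [Complex.normSq_apply, Complex.sub_re, Complex.sub_im, Complex.mul_re,
      Complex.mul_im]
    ring
  linarith [he ▸ h]

lemma gRho_eq (w : ℂ) (hc : (1:ℂ) - ρ*w ≠ 0) : gRho ρ w = Elin (ff ρ w) := by
  have hD := hDpos ρ w hc
  have h1 : (ff ρ w).re = 2 * ((ρ * (w.re ^ 2 + w.im ^ 2) - w.re + w.im) *
        (ρ * (w.re ^ 2 + w.im ^ 2) - w.re - w.im) /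
      (ρ ^ 2 * (w.re ^ 2 + w.im ^ 2) - 2 * ρ * w.re + 1) ^ 2) := by
    simp [ff, Complex.div_re, Complex.normSq_apply, Complex.sub_re, Complex.sub_im,
      Complex.mul_re, Complex.mul_im, pow_two]
    field_simp
    ring
  have h2 : (ff ρ w).im = 2 * (2 * (w.re - ρ * (w.re ^ 2 + w.im ^ 2)) * w.im /
      (ρ ^ 2 * (w.re ^ 2 + w.im ^ 2) - 2 * ρ * w.re + 1) ^ 2) := by
    simp [ff, Complex.div_im, Complex.normSq_apply, Complex.sub_re, Complex.sub_im,
      Complex.mul_re, Complex.mul_im, pow_two]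
    field_simp
    ring
  rw [Elin_apply, h1, h2]; rfl

lemma hUopen : IsOpen {w : ℂ | (1:ℂ) - ρ*w ≠ 0} := by
  have hco : Continuous fun w : ℂ => 1 - (ρ:ℝ)*w := by continuity
  exact isOpen_compl_singleton.preimage hco

lemma fderiv_g (w : ℂ) (hc : (1:ℂ) - ρ*w ≠ 0) :
    fderiv ℝ (gRho ρ) w
      = Elin.comp (((1:ℂ→L[ℂ]ℂ).smulRight (ff1 ρ w)).restrictScalars ℝ) := by
  have hev : gRho ρ =ᶠ[nhds w] fun x => Elin (ff ρ x) := by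
    filter_upwards [(hUopen ρ).mem_nhds hc] with x hx using gRho_eq ρ x hx
  rw [hev.fderiv_eq]
  exact (Elin.hasFDerivAt.comp w (((hdf ρ w hc).hasFDerivAt).restrictScalars ℝ)).fderiv

lemma pdx_g (w : ℂ) (hc : (1:ℂ) - ρ*w ≠ 0) : pdx (gRho ρ) w = Elin (ff1 ρ w) := by
  rw [pdx, fderiv_g ρ w hc]; simp

lemma pdy_g (w : ℂ) (hc : (1:ℂ) - ρ*w ≠ 0) :
    pdy (gRho ρ) w = Elin (Complex.I * ff1 ρ w) := by
  rw [pdy, fderiv_g ρ w hc]; simp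

lemma pdxx_g (w : ℂ) (hc : (1:ℂ) - ρ*w ≠ 0) :
    pdx (pdx (gRho ρ)) w = Elin (ff2 ρ w) := by
  have hev : pdx (gRho ρ) =ᶠ[nhds w] fun x => Elin (ff1 ρ x) := by
    filter_upwards [(hUopen ρ).mem_nhds hc] with x hx using pdx_g ρ x hx
  have hF : HasFDerivAt (fun x => Elin (ff1 ρ x))
      (Elin.comp (((1:ℂ→L[ℂ]ℂ).smulRight (ff2 ρ w)).restrictScalars ℝ)) w :=
    Elin.hasFDerivAt.comp w (((hdf1 ρ w hc).hasFDerivAt).restrictScalars ℝ)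
  rw [pdx, hev.fderiv_eq, hF.fderiv]
  simp

lemma pdxy_g (w : ℂ) (hc : (1:ℂ) - ρ*w ≠ 0) :
    pdx (pdy (gRho ρ)) w = Elin (Complex.I * ff2 ρ w) := by
  have hev : pdy (gRho ρ) =ᶠ[nhds w] fun x => Elin (Complex.I * ff1 ρ x) := by
    filter_upwards [(hUopen ρ).mem_nhds hc] with x hx using pdy_g ρ x hx
  have hF : HasFDerivAt (fun x => Elin (Complex.I * ff1 ρ x))
      (Elin.comp (((1:ℂ→L[ℂ]ℂ).smulRight (Complex.I * ff2 ρ w)).restrictScalars ℝ)) w :=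
    Elin.hasFDerivAt.comp w
      ((((hdf1 ρ w hc).const_mul Complex.I).hasFDerivAt).restrictScalars ℝ)
  rw [pdx, hev.fderiv_eq, hF.fderiv]
  simp

lemma norm_e3 (a b c : ℝ) : ‖e3 a b c‖ = Real.sqrt (a^2+b^2+c^2) := by
  rw [EuclideanSpace.norm_eq]
  congr 1
  simp [e3, Fin.sum_univ_three, Real.norm_eq_abs, sq_abs]

end GRhoAux

open GRhoAux in
/-- With `u = ∂²g_ρ/∂x²` and `v = ∂²g_ρ/∂x∂y` at a point of the open unit disk,
`|u|² + |v|² + 2|u ∧ v| = 64(4ρ(ρ(x²+y²)+x)+1)/(ρ²(x²+y²)−2xρ+1)⁴` and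
`|u|² + |v|² − 2|u ∧ v| = 0`. -/
theorem g_rho_second_derivatives (ρ : ℝ) (hρ : ρ ∈ Set.Ioo (0 : ℝ) 1)
    (z : ℂ) (hz : z ∈ Metric.ball (0 : ℂ) 1) :
    ‖pdx (pdx (gRho ρ)) z‖ ^ 2 + ‖pdx (pdy (gRho ρ)) z‖ ^ 2 +
        2 * ‖cross (pdx (pdx (gRho ρ)) z) (pdx (pdy (gRho ρ)) z)‖ =
      64 * (4 * ρ * (ρ * (z.re ^ 2 + z.im ^ 2) + z.re) + 1) /
        (ρ ^ 2 * (z.re ^ 2 + z.im ^ 2) - 2 * z.re * ρ + 1) ^ 4 ∧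
    ‖pdx (pdx (gRho ρ)) z‖ ^ 2 + ‖pdx (pdy (gRho ρ)) z‖ ^ 2 -
        2 * ‖cross (pdx (pdx (gRho ρ)) z) (pdx (pdy (gRho ρ)) z)‖ = 0 := by
  have hz1 : ‖z‖ < 1 := by
    simpa [Metric.mem_ball, Complex.dist_eq] using hz
  have hc : (1:ℂ) - ρ*z ≠ 0 := by
    intro h
    have h1 : (↑ρ * z : ℂ) = 1 := by linear_combination -h
    have h2 := congrArg norm h1
    rw [norm_mul, Complex.norm_real, norm_one, Real.norm_eq_abs, abs_of_pos hρ.1] at h2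
    nlinarith [hρ.1, hρ.2, norm_nonneg z]
  rw [pdxx_g ρ z hc, pdxy_g ρ z hc, Elin_apply, Elin_apply]
  set p := (ff2 ρ z).re with hp
  set q := (ff2 ρ z).im with hq
  have hIre : (Complex.I * ff2 ρ z).re = -q := by simp [hq]
  have hIim : (Complex.I * ff2 ρ z).im = p := by simp [hp]
  rw [hIre, hIim]
  have hnu : ‖e3 p q 0‖^2 = p^2+q^2 := by
    rw [norm_e3, Real.sq_sqrt (by positivity)]; ring
  have hnv : ‖e3 (-q) p 0‖^2 = p^2+q^2 := by
    rw [norm_e3, Real.sq_sqrt (by positivity)]; ring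
  have hcr : cross (e3 p q 0) (e3 (-q) p 0) = e3 0 0 (p^2+q^2) := by
    have h0 : cross (e3 p q 0) (e3 (-q) p 0)
        = e3 (q*0 - 0*p) (0*(-q) - p*0) (p*p - q*(-q)) := rfl
    rw [h0, show q*0 - 0*p = (0:ℝ) by ring, show 0*(-q) - p*0 = (0:ℝ) by ring,
      show p*p - q*(-q) = p^2+q^2 by ring]
  have hncr : ‖e3 (0:ℝ) 0 (p^2+q^2)‖ = p^2+q^2 := by
    rw [norm_e3, show (0:ℝ)^2+0^2+(p^2+q^2)^2 = (p^2+q^2)^2 by ring,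
      Real.sqrt_sq (by positivity)]
  have hD := hDpos ρ z hc
  have key : p^2+q^2 = 16*(4*ρ*(ρ*(z.re^2+z.im^2)+z.re)+1)
      / (ρ^2*(z.re^2+z.im^2) - 2*z.re*ρ+1)^4 := by
    have h0 : p^2+q^2 = Complex.normSq (ff2 ρ z) := by
      rw [Complex.normSq_apply]; ring
    have hns : Complex.normSq (ff2 ρ z)
        = Complex.normSq (4*(1+2*(ρ:ℝ)*z)) / (Complex.normSq (1 - (ρ:ℝ)*z))^4 := by
      simp only [ff2]; rw [map_div₀, map_pow]
    have h1 : Complex.normSq (4*(1+2*(ρ:ℝ)*z) : ℂ)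
        = 16*(4*ρ*(ρ*(z.re^2+z.im^2)+z.re)+1) := by
      simp [Complex.normSq_apply, Complex.add_re, Complex.add_im, Complex.mul_re,
        Complex.mul_im]
      ring
    have h2 : Complex.normSq (1 - (ρ:ℝ)*z) = ρ^2*(z.re^2+z.im^2) - 2*z.re*ρ+1 := by
      simp [Complex.normSq_apply, Complex.sub_re, Complex.sub_im, Complex.mul_re,
        Complex.mul_im]
      ring
    rw [h0, hns, h1, h2]
  constructor
  · rw [hnu, hnv, hcr, hncr, key]; ring
  · rw [hnu, hnv, hcr, hncr]; ring
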